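/- Let n ≥ 1, m ≥ 1 be natural numbers, let H : Matrix (Fin n) (Fin n) ℂ be Hermitian, let F : Matrix (Fin n) (Fin m) ℂ, and let C₁, C₂ be real numbers with C₂ ≥ 0. If the matrix H + C₁ • (1 : Matrix (Fin n) (Fin n) ℂ) − C₂ • (F * Fᴴ) is positive semidefinite, then (Matrix.trace (Fᴴ * H * F)).re ≥ − C₁ · e + (C₂ / n) · e², where e := ∑_{p,α} ‖F p α‖². -/

import Mathlib

open scoped ComplexOrder
open Matrix

lemma diag_re_nonneg' {k : ℕ} {Q : Matrix (Fin k) (Fin k) ℂ} (hQ : Q.PosSemidef) (i : Fin k) :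
    0 ≤ (Q i i).re := by
  have h := hQ.dotProduct_mulVec_nonneg (Pi.single i 1)
  simp [mulVec_single, dotProduct, Pi.single_apply] at h
  exact (Complex.le_def.mp h).1

lemma trace_re_nonneg' {k : ℕ} {Q : Matrix (Fin k) (Fin k) ℂ} (hQ : Q.PosSemidef) :
    0 ≤ (Matrix.trace Q).re := by
  rw [Matrix.trace, Complex.re_sum]
  exact Finset.sum_nonneg fun i _ => diag_re_nonneg' hQ i

/-- Source-curvature estimate in the proof of Theorem 1.2: if
`H + C₁ • 1 − C₂ • (F * Fᴴ)` is positive semidefinite, then the Ricci term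
`trace (Fᴴ * H * F)` is bounded below by `−C₁ e + (C₂/n) e²`, where `e` is the squared
Frobenius norm of `F` (the energy density). -/
theorem source_curvature_estimate (n m : ℕ) (hn : 1 ≤ n) (hm : 1 ≤ m)
    (H : Matrix (Fin n) (Fin n) ℂ) (hH : H.IsHermitian)
    (F : Matrix (Fin n) (Fin m) ℂ) (C₁ C₂ : ℝ) (hC₂ : 0 ≤ C₂)
    (hpsd : (H + C₁ • (1 : Matrix (Fin n) (Fin n) ℂ) - C₂ • (F * Fᴴ)).PosSemidef) :
    (Matrix.trace (Fᴴ * H * F)).re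
      ≥ - C₁ * (∑ p : Fin n, ∑ α : Fin m, ‖F p α‖^2)
        + (C₂ / n) * (∑ p : Fin n, ∑ α : Fin m, ‖F p α‖^2)^2 := by
  set A := F * Fᴴ with hAdef
  set P := H + C₁ • (1 : Matrix (Fin n) (Fin n) ℂ) - C₂ • A with hPdef
  set e : ℝ := ∑ p : Fin n, ∑ α : Fin m, ‖F p α‖^2 with he
  have hA : A.PosSemidef := posSemidef_self_mul_conjTranspose F
  -- diagonal of A
  have hdiag : ∀ i, A i i = ((∑ α : Fin m, ‖F i α‖^2 : ℝ) : ℂ) := by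
    intro i
    simp only [hAdef, Matrix.mul_apply, conjTranspose_apply, Complex.ofReal_sum]
    refine Finset.sum_congr rfl fun α _ => ?_
    rw [mul_comm, Complex.star_def, Complex.conj_mul']
    push_cast
    ring
  -- trace A = e
  have htrA : Matrix.trace A = (e : ℂ) := by
    rw [Matrix.trace, he, Complex.ofReal_sum]
    exact Finset.sum_congr rfl fun i _ => hdiag i
  -- trace Fᴴ F = e
  have htrFF : Matrix.trace (Fᴴ * F) = (e : ℂ) := by
    rw [Matrix.trace_mul_comm]; exact htrA
  -- decomposition
  have hdecomp : Fᴴ * H * F = Fᴴ * P * F + C₂ • (Fᴴ * A * F) - C₁ • (Fᴴ * F) := by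
    have hHeq : H = P + C₂ • A - C₁ • (1 : Matrix (Fin n) (Fin n) ℂ) := by
      rw [hPdef]; abel
    rw [hHeq]
    simp only [Matrix.mul_add, Matrix.add_mul, Matrix.mul_sub, Matrix.sub_mul,
      Matrix.mul_smul, Matrix.smul_mul, Matrix.mul_one, hAdef]
  -- traces
  have htrAA : Matrix.trace (Fᴴ * A * F) = Matrix.trace (A * A) := by
    rw [Matrix.trace_mul_comm, ← Matrix.mul_assoc, ← Matrix.mul_assoc, ← hAdef]
  have h1 : 0 ≤ (Matrix.trace (Fᴴ * P * F)).re :=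
    trace_re_nonneg' (hpsd.conjTranspose_mul_mul_same F)
  -- lower bound for trace (A*A)
  have h2 : e^2 / n ≤ (Matrix.trace (A * A)).re := by
    have hAAdiag : ∀ i, ((A * A) i i).re = ∑ j, Complex.normSq (A i j) := by
      intro i
      rw [Matrix.mul_apply, Complex.re_sum]
      refine Finset.sum_congr rfl fun j _ => ?_
      rw [← hA.isHermitian.apply i j]
      rw [Complex.star_def, Complex.normSq_conj, mul_comm, Complex.mul_conj]
      simp
    have hge : ∑ i, ∑ j, Complex.normSq (A i j) ≥ ∑ i : Fin n, (∑ α : Fin m, ‖F i α‖^2)^2 := by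
      refine Finset.sum_le_sum fun i _ => ?_
      calc (∑ α : Fin m, ‖F i α‖^2)^2 = Complex.normSq (A i i) := by
            rw [hdiag i, Complex.normSq_ofReal]; ring
        _ ≤ ∑ j, Complex.normSq (A i j) :=
            Finset.single_le_sum (fun j _ => Complex.normSq_nonneg _) (Finset.mem_univ i)
    have hcheb : e^2 ≤ n * ∑ i : Fin n, (∑ α : Fin m, ‖F i α‖^2)^2 := by
      have := sq_sum_le_card_mul_sum_sq (s := (Finset.univ : Finset (Fin n)))
        (f := fun i => ∑ α : Fin m, ‖F i α‖^2)
      simpa [he] using this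
    have htr : (Matrix.trace (A * A)).re = ∑ i, ∑ j, Complex.normSq (A i j) := by
      rw [Matrix.trace, Complex.re_sum]
      exact Finset.sum_congr rfl fun i _ => hAAdiag i
    rw [htr]
    rw [div_le_iff₀ (by positivity)]
    calc e^2 ≤ n * ∑ i : Fin n, (∑ α : Fin m, ‖F i α‖^2)^2 := hcheb
      _ ≤ (∑ i, ∑ j, Complex.normSq (A i j)) * n := by rw [mul_comm]; exact mul_le_mul_of_nonneg_right hge (Nat.cast_nonneg n)
  -- put together
  have hre : (Matrix.trace (Fᴴ * H * F)).re
      = (Matrix.trace (Fᴴ * P * F)).re + C₂ * (Matrix.trace (A * A)).re - C₁ * e := by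
    rw [hdecomp, Matrix.trace_sub, Matrix.trace_add, Matrix.trace_smul, Matrix.trace_smul,
      htrAA, htrFF]
    simp [Complex.add_re, Complex.sub_re, Complex.smul_re]
  rw [hre]
  have h3 : C₂ * (e^2 / n) ≤ C₂ * (Matrix.trace (A * A)).re := mul_le_mul_of_nonneg_left h2 hC₂
  have : C₂ / n * e^2 = C₂ * (e^2 / n) := by ring
  linarith
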